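/- arXiv:1701.02414 — 4 statements merged into one kernel-verified Lean document; each statement's English description precedes it below -/
import Mathlib

section
/- Let V ≥ 1. For any (infinite) sequence (u_k)_{k≥1} of points from U there exists a sequence (e_k)_{k≥1} of points from E such that ‖Σ_{i=1}^k (u_i − e_i)‖₂ is uniformly bounded over all k = 1, 2, …; in particular one can achieve ‖Σ_{i=1}^k (u_i − e_i)‖₂ ≤ √V · (1 + 2V) for all k, with ‖Σ_{i=1}^k (u_i − e_i)‖₂ ≤ √V whenever k is a multiple of V. -/
open Finset

/-- `E`: the set of standard basis vectors of `ℝ^V`.  Note that for `x : Fin V → ℝ`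
the ambient norm `‖x‖` is the sup norm `‖x‖_∞`. -/
def stdBasisSet (V : ℕ) : Set (Fin V → ℝ) := Set.range fun j => (Pi.single j 1 : Fin V → ℝ)

/-- The Euclidean (`ℓ²`) norm on `Fin V → ℝ`. -/
noncomputable def euclNorm {V : ℕ} (x : Fin V → ℝ) : ℝ := Real.sqrt (∑ j, x j ^ 2)

/-! ### Auxiliary EDF (earliest-deadline-first) construction

Given cumulative masses `A j k` (nondecreasing in `k`, with `A j 0 = 0` and
`∑ j, A j k = k`), we construct integer counts `cnt k j` that increase by exactly one
unit per time step and stay within distance `1` of `A j k`.  The coordinate picked at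
each step is an eligible one (count ≤ mass) whose "deadline" (first future time where
the lower bound `A j · - 1` would be violated) is smallest. -/

/-- Deadline of coordinate `j` given current counts `N`: first time `m` at which
`A j m > N j + 1`, as an extended natural number. -/
noncomputable def ddlEDF {V : ℕ} (A : Fin V → ℕ → ℝ) (N : Fin V → ℕ) (j : Fin V) : ℕ∞ :=
  ⨅ (m : ℕ) (_ : (N j : ℝ) + 1 < A j m), (m : ℕ∞)

open Classical in
/-- The coordinate selected at step `k` from counts `N`: an eligible coordinate of
minimal deadline. -/
noncomputable def selEDF {V : ℕ} (hV : 0 < V) (A : Fin V → ℕ → ℝ) (k : ℕ)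
    (N : Fin V → ℕ) : Fin V :=
  if h : (Finset.univ.filter fun j => (N j : ℝ) ≤ A j k).Nonempty then
    (Finset.exists_min_image _ (ddlEDF A N) h).choose
  else ⟨0, hV⟩

/-- The cumulative counts produced by the EDF greedy. -/
noncomputable def cntEDF {V : ℕ} (hV : 0 < V) (A : Fin V → ℕ → ℝ) : ℕ → Fin V → ℕ
  | 0 => fun _ => 0
  | (k+1) => fun j =>
      cntEDF hV A k j + (if j = selEDF hV A (k+1) (cntEDF hV A k) then 1 else 0)

namespace EDF

variable {V : ℕ} (hV : 0 < V) (A : Fin V → ℕ → ℝ)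

lemma cnt_succ (k : ℕ) (j : Fin V) :
    cntEDF hV A (k+1) j
      = cntEDF hV A k j + (if j = selEDF hV A (k+1) (cntEDF hV A k) then 1 else 0) := rfl

lemma cnt_zero (j : Fin V) : cntEDF hV A 0 j = 0 := rfl

lemma ddl_le {N : Fin V → ℕ} {j : Fin V} {m : ℕ} (h : (N j : ℝ) + 1 < A j m) :
    ddlEDF A N j ≤ (m : ℕ∞) := by
  have : (⨅ (m : ℕ) (_ : (N j : ℝ) + 1 < A j m), (m : ℕ∞)) ≤ (m : ℕ∞) := iInf₂_le m h
  exact this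

open Classical in
lemma sel_spec {N : Fin V → ℕ} {k : ℕ} (hne : ∃ j, (N j : ℝ) ≤ A j k) :
    ((N (selEDF hV A k N) : ℝ) ≤ A (selEDF hV A k N) k) ∧
      ∀ j, (N j : ℝ) ≤ A j k → ddlEDF A N (selEDF hV A k N) ≤ ddlEDF A N j := by
  have h : (Finset.univ.filter fun j => (N j : ℝ) ≤ A j k).Nonempty := by
    obtain ⟨j, hj⟩ := hne
    exact ⟨j, Finset.mem_filter.mpr ⟨Finset.mem_univ _, hj⟩⟩
  unfold selEDF
  rw [dif_pos h]
  obtain ⟨hmem, hmin⟩ := (Finset.exists_min_image _ (ddlEDF A N) h).choose_spec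
  rw [Finset.mem_filter] at hmem
  exact ⟨hmem.2, fun j hj => hmin j (Finset.mem_filter.mpr ⟨Finset.mem_univ _, hj⟩)⟩

lemma cnt_sum : ∀ k, ∑ j, cntEDF hV A k j = k := by
  intro k
  induction k with
  | zero => simp [cnt_zero]
  | succ n ihn =>
      simp only [cnt_succ, Finset.sum_add_distrib, ihn, Finset.sum_ite_eq',
        Finset.mem_univ, if_pos]

lemma cnt_mono {j : Fin V} : ∀ {a c : ℕ}, a ≤ c → cntEDF hV A a j ≤ cntEDF hV A c j := by
  have : Monotone fun k => cntEDF hV A k j := by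
    apply monotone_nat_of_le_succ
    intro k
    rw [cnt_succ]
    exact Nat.le_add_right _ _
  intro a c h
  exact this h

lemma cnt_const {a : ℕ} {j : Fin V} :
    ∀ {c : ℕ}, a ≤ c → (∀ t, a ≤ t → t < c → j ≠ selEDF hV A (t+1) (cntEDF hV A t)) →
      cntEDF hV A c j = cntEDF hV A a j := by
  intro c
  induction c with
  | zero =>
      intro hac _
      have ha0 : a = 0 := by omega
      rw [ha0]
  | succ n ihn =>
      intro hac h
      rcases Nat.lt_or_ge a (n+1) with h1 | h2
      · have han : a ≤ n := by omega
        have hne := h n han (by omega)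
        rw [cnt_succ, if_neg hne, add_zero]
        exact ihn han (fun t ht1 ht2 => h t ht1 (by omega))
      · have : a = n + 1 := by omega
        rw [this]

lemma elig_exists (hsum : ∀ k, ∑ j, A j k = (k : ℝ)) (k : ℕ) :
    ∃ j, (cntEDF hV A k j : ℝ) ≤ A j (k+1) := by
  by_contra hc
  push_neg at hc
  have huniv : (Finset.univ : Finset (Fin V)).Nonempty := ⟨⟨0, hV⟩, Finset.mem_univ _⟩
  have hlt := Finset.sum_lt_sum_of_nonempty huniv (fun j _ => hc j)
  rw [hsum] at hlt
  have hcast : ∑ j, (cntEDF hV A k j : ℝ) = (k : ℝ) := by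
    rw [← Nat.cast_sum, cnt_sum hV A k]
  rw [hcast] at hlt
  have : (k : ℝ) + 1 ≤ (k : ℝ) := by push_cast at hlt ⊢; linarith
  linarith

lemma cnt_upper (hA0 : ∀ j, A j 0 = 0) (hmono : ∀ j, Monotone (A j))
    (hsum : ∀ k, ∑ j, A j k = (k : ℝ)) :
    ∀ k j, (cntEDF hV A k j : ℝ) ≤ A j k + 1 := by
  intro k
  induction k with
  | zero => intro j; simp [cnt_zero, hA0 j]
  | succ n ihn =>
      intro j
      obtain ⟨helig, _⟩ := sel_spec hV A (elig_exists hV A hsum n)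
      by_cases hj : j = selEDF hV A (n+1) (cntEDF hV A n)
      · rw [cnt_succ, if_pos hj, hj]
        push_cast
        linarith [helig]
      · rw [cnt_succ, if_neg hj, add_zero]
        have h1 := ihn j
        have h2 := hmono j (Nat.le_succ n)
        linarith

lemma exists_last_pick {b k2 : ℕ} {j : Fin V} (hb : b ≤ k2)
    (hlt : cntEDF hV A b j < cntEDF hV A k2 j) :
    ∃ t, b ≤ t ∧ t < k2 ∧ j = selEDF hV A (t+1) (cntEDF hV A t) ∧
      cntEDF hV A k2 j = cntEDF hV A (t+1) j := by
  classical
  set P : ℕ → Prop := fun t => b ≤ t ∧ t < k2 ∧ j = selEDF hV A (t+1) (cntEDF hV A t)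
    with hP
  have hwit : ∃ t, P t := by
    by_contra hc
    push_neg at hc
    have : cntEDF hV A k2 j = cntEDF hV A b j := by
      apply cnt_const hV A hb
      intro t ht1 ht2 hsel
      exact (hc t) ⟨ht1, ht2, hsel⟩
    omega
  obtain ⟨t0, ht0⟩ := hwit
  set S : Finset ℕ := (Finset.range k2).filter P with hS
  have hSne : S.Nonempty := by
    refine ⟨t0, ?_⟩
    rw [hS, Finset.mem_filter, Finset.mem_range]
    exact ⟨ht0.2.1, ht0⟩
  set t := S.max' hSne with ht
  have htS : t ∈ S := S.max'_mem hSne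
  rw [hS, Finset.mem_filter] at htS
  obtain ⟨htr, hbt, htk, hjt⟩ := htS
  refine ⟨t, hbt, htk, hjt, ?_⟩
  apply cnt_const hV A (Nat.succ_le_of_lt htk)
  intro s hs1 hs2 hsel
  have hsS : s ∈ S := by
    rw [hS, Finset.mem_filter, Finset.mem_range]
    exact ⟨hs2, le_trans hbt (by omega), hs2, hsel⟩
  have := S.le_max' s hsS
  omega

/-- The key lower bound: EDF never lets a count fall more than 1 below the mass. -/
lemma cnt_lower (hA0 : ∀ j, A j 0 = 0) (hmono : ∀ j, Monotone (A j))
    (hsum : ∀ k, ∑ j, A j k = (k : ℝ)) :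
    ∀ k j, A j k - 1 ≤ (cntEDF hV A k j : ℝ) := by
  classical
  by_contra hcon
  push_neg at hcon
  obtain ⟨k2, js, hjs⟩ := hcon
  -- hjs : cntEDF hV A k2 js < A js k2 - 1
  have hk2pos : 0 < k2 := by
    rcases Nat.eq_zero_or_pos k2 with h0 | h
    · exfalso
      rw [h0] at hjs
      have h1 := hA0 js
      have h2 : (0 : ℝ) ≤ (cntEDF hV A 0 js : ℝ) := Nat.cast_nonneg _
      rw [h1] at hjs
      linarith
    · exact h
  set pick : ℕ → Fin V := fun t => selEDF hV A (t+1) (cntEDF hV A t) with hpickdef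
  set Bad : ℕ → Prop :=
    fun t => A (pick t) k2 ≤ (cntEDF hV A (t+1) (pick t) : ℝ) with hBaddef
  set B : Finset ℕ := (Finset.range k2).filter Bad with hBdef
  obtain ⟨b, hble, hgood, hdich⟩ :
      ∃ b, b ≤ k2 ∧
        (∀ t, b ≤ t → t < k2 → (cntEDF hV A (t+1) (pick t) : ℝ) < A (pick t) k2) ∧
        (∀ j, A j k2 ≤ (cntEDF hV A b j : ℝ) + 1 ∨ A j b ≤ (cntEDF hV A b j : ℝ)) := by
    by_cases hBne : B.Nonempty
    · set tb := B.max' hBne with htbdef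
      have htbB : tb ∈ B := B.max'_mem hBne
      rw [hBdef, Finset.mem_filter, Finset.mem_range] at htbB
      obtain ⟨htbk, htbbad⟩ := htbB
      refine ⟨tb + 1, htbk, ?_, ?_⟩
      · intro t hbt htk
        by_contra hc
        push_neg at hc
        have htB : t ∈ B := by
          rw [hBdef, Finset.mem_filter, Finset.mem_range]
          exact ⟨htk, hc⟩
        have := B.le_max' t htB
        omega
      · -- EDF dichotomy at the bad step tb+1
        obtain ⟨helig, hmin⟩ := sel_spec hV A (elig_exists hV A hsum tb)
        have hpicked : cntEDF hV A (tb+1) (pick tb) = cntEDF hV A tb (pick tb) + 1 := by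
          rw [hpickdef]
          simp [cnt_succ]
        have hbadle : A (pick tb) k2 ≤ (cntEDF hV A tb (pick tb) : ℝ) + 1 := by
          rw [hBaddef] at htbbad
          rw [hpicked] at htbbad
          push_cast at htbbad
          linarith
        have hdd : (k2 : ℕ∞) < ddlEDF A (cntEDF hV A tb) (pick tb) := by
          by_contra hc
          push_neg at hc
          -- if the deadline were ≤ k2, some m ≤ k2 has A (pick tb) m > cnt + 1
          have hall : ∀ m, ((cntEDF hV A tb (pick tb) : ℝ) + 1 < A (pick tb) m) →
              k2 < m := by
            intro m hPm
            by_contra hmk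
            push_neg at hmk
            have := hmono (pick tb) hmk
            linarith
          have hge : ((k2 + 1 : ℕ) : ℕ∞) ≤ ddlEDF A (cntEDF hV A tb) (pick tb) := by
            unfold ddlEDF
            refine le_iInf₂ fun m hPm => ?_
            exact_mod_cast Nat.succ_le_of_lt (hall m hPm)
          have hle2 := le_trans hge hc
          have := Nat.cast_le.mp hle2
          omega
        intro j
        by_cases hel : (cntEDF hV A tb j : ℝ) ≤ A j (tb+1)
        · left
          have h1 : (k2 : ℕ∞) < ddlEDF A (cntEDF hV A tb) j :=
            lt_of_lt_of_le hdd (hmin j hel)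
          have h2 : ¬ ((cntEDF hV A tb j : ℝ) + 1 < A j k2) := by
            intro hP
            have := ddl_le A hP
            have hlt2 := lt_of_lt_of_le h1 this
            exact absurd (Nat.cast_lt.mp hlt2) (lt_irrefl k2)
          push_neg at h2
          have h3 : cntEDF hV A tb j ≤ cntEDF hV A (tb+1) j := cnt_mono hV A (Nat.le_succ tb)
          have h4 : (cntEDF hV A tb j : ℝ) ≤ (cntEDF hV A (tb+1) j : ℝ) := by
            exact_mod_cast h3
          linarith
        · right
          push_neg at hel
          have h3 : cntEDF hV A tb j ≤ cntEDF hV A (tb+1) j := cnt_mono hV A (Nat.le_succ tb)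
          have h4 : (cntEDF hV A tb j : ℝ) ≤ (cntEDF hV A (tb+1) j : ℝ) := by
            exact_mod_cast h3
          linarith
    · -- no bad step at all: take b = 0
      refine ⟨0, Nat.zero_le _, ?_, ?_⟩
      · intro t _ htk
        by_contra hc
        push_neg at hc
        exact hBne ⟨t, by rw [hBdef, Finset.mem_filter, Finset.mem_range]; exact ⟨htk, hc⟩⟩
      · intro j
        right
        rw [hA0 j, cnt_zero]
        norm_num
  -- strictness for the violating coordinate
  have hjsb : A js b ≤ (cntEDF hV A b js : ℝ) := by
    rcases hdich js with h | h
    · exfalso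
      have h1 : cntEDF hV A b js ≤ cntEDF hV A k2 js := cnt_mono hV A hble
      have h2 : (cntEDF hV A b js : ℝ) ≤ (cntEDF hV A k2 js : ℝ) := by exact_mod_cast h1
      linarith
    · exact h
  -- per-coordinate bounds
  have hmain : ∀ j ∈ Finset.univ,
      (cntEDF hV A k2 j : ℝ) - (cntEDF hV A b j : ℝ) ≤ A j k2 - A j b := by
    intro j _
    rcases eq_or_lt_of_le (cnt_mono hV A (j := j) hble) with heq | hlt
    · have h2 : (cntEDF hV A b j : ℝ) = (cntEDF hV A k2 j : ℝ) := by exact_mod_cast heq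
      have := hmono j hble
      linarith
    · obtain ⟨t, hbt, htk, hjt, hcnteq⟩ := exists_last_pick hV A hble hlt
      have hgp := hgood t hbt htk
      rw [hpickdef] at hgp
      simp only at hgp
      rw [← hjt] at hgp
      have hck2 : (cntEDF hV A k2 j : ℝ) < A j k2 := by
        rw [hcnteq]
        exact_mod_cast hgp
      rcases hdich j with h | h
      · exfalso
        have h1 : cntEDF hV A b j + 1 ≤ cntEDF hV A k2 j := hlt
        have h2 : (cntEDF hV A b j : ℝ) + 1 ≤ (cntEDF hV A k2 j : ℝ) := by exact_mod_cast h1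
        linarith
      · linarith
  have hstrict : ∃ j ∈ Finset.univ,
      (cntEDF hV A k2 j : ℝ) - (cntEDF hV A b j : ℝ) < A j k2 - A j b :=
    ⟨js, Finset.mem_univ _, by linarith⟩
  have hlt := Finset.sum_lt_sum hmain hstrict
  have hsf : ∑ j, ((cntEDF hV A k2 j : ℝ) - (cntEDF hV A b j : ℝ)) = (k2 : ℝ) - (b : ℝ) := by
    rw [Finset.sum_sub_distrib, ← Nat.cast_sum, ← Nat.cast_sum, cnt_sum hV A, cnt_sum hV A]
  have hsg : ∑ j, (A j k2 - A j b) = (k2 : ℝ) - (b : ℝ) := by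
    rw [Finset.sum_sub_distrib, hsum, hsum]
  rw [hsf, hsg] at hlt
  exact lt_irrefl _ hlt

end EDF

/-- Theorem 2 (Existence of Discrete Sequences): for any sequence of points of the
simplex `U = stdSimplex ℝ (Fin V)` there is a sequence of standard basis vectors whose
partial sums stay uniformly close in Euclidean norm. -/
theorem exists_discrete_sequence (V : ℕ) (hV : 1 ≤ V)
    (u : ℕ → Fin V → ℝ) (hu : ∀ k, 1 ≤ k → u k ∈ stdSimplex ℝ (Fin V)) :
    ∃ e : ℕ → Fin V → ℝ, (∀ k, 1 ≤ k → e k ∈ stdBasisSet V) ∧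
      (∀ k, 1 ≤ k →
        euclNorm (∑ i ∈ Icc 1 k, (u i - e i)) ≤ Real.sqrt V * (1 + 2 * V)) ∧
      (∀ k, 1 ≤ k → V ∣ k →
        euclNorm (∑ i ∈ Icc 1 k, (u i - e i)) ≤ Real.sqrt V) := by
  have hV0 : 0 < V := hV
  set A : Fin V → ℕ → ℝ := fun j k => ∑ i ∈ Icc 1 k, u i j with hAdef
  have hA0 : ∀ j, A j 0 = 0 := by
    intro j; rw [hAdef]; simp
  have hstep : ∀ j k, A j (k+1) = A j k + u (k+1) j := by
    intro j k
    rw [hAdef]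
    exact Finset.sum_Icc_succ_top (by omega) _
  have hupos : ∀ i, 1 ≤ i → ∀ j, 0 ≤ u i j := by
    intro i hi j
    exact (hu i hi).1 j
  have husum : ∀ i, 1 ≤ i → ∑ j, u i j = 1 := by
    intro i hi
    exact (hu i hi).2
  have hmono : ∀ j, Monotone (A j) := by
    intro j
    apply monotone_nat_of_le_succ
    intro k
    rw [hstep j k]
    have := hupos (k+1) (by omega) j
    linarith
  have hsum : ∀ k, ∑ j, A j k = (k : ℝ) := by
    intro k
    rw [hAdef]
    simp only
    rw [Finset.sum_comm]
    have : ∀ i ∈ Icc 1 k, ∑ j, u i j = 1 := by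
      intro i hi
      rw [Finset.mem_Icc] at hi
      exact husum i hi.1
    rw [Finset.sum_congr rfl this]
    simp [Nat.card_Icc]
  -- the discrete sequence
  set e : ℕ → Fin V → ℝ :=
    fun i => (Pi.single (selEDF hV0 A i (cntEDF hV0 A (i-1))) 1 : Fin V → ℝ) with hedef
  have hupper := EDF.cnt_upper hV0 A hA0 hmono hsum
  have hlower := EDF.cnt_lower hV0 A hA0 hmono hsum
  have hcount : ∀ k j, ∑ i ∈ Icc 1 k, e i j = (cntEDF hV0 A k j : ℝ) := by
    intro k j
    induction k with
    | zero => simp [EDF.cnt_zero]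
    | succ n ihn =>
        rw [Finset.sum_Icc_succ_top (by omega : 1 ≤ n + 1), ihn]
        rw [hedef]
        simp only [Nat.add_sub_cancel]
        rw [EDF.cnt_succ]
        push_cast
        rw [Pi.single_apply]
  have hcoord : ∀ k j,
      (∑ i ∈ Icc 1 k, (u i - e i)) j = A j k - (cntEDF hV0 A k j : ℝ) := by
    intro k j
    rw [Finset.sum_apply]
    simp only [Pi.sub_apply]
    rw [Finset.sum_sub_distrib, hcount k j]
  have hkey : ∀ k, euclNorm (∑ i ∈ Icc 1 k, (u i - e i)) ≤ Real.sqrt V := by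
    intro k
    rw [euclNorm]
    have hle : ∑ j, ((∑ i ∈ Icc 1 k, (u i - e i)) j) ^ 2 ≤ (V : ℝ) := by
      calc ∑ j, ((∑ i ∈ Icc 1 k, (u i - e i)) j) ^ 2
          ≤ ∑ _j : Fin V, (1 : ℝ) := by
            apply Finset.sum_le_sum
            intro j _
            rw [hcoord k j]
            have h1 := hupper k j
            have h2 := hlower k j
            nlinarith
        _ = (V : ℝ) := by simp
    exact Real.sqrt_le_sqrt hle
  refine ⟨e, ?_, ?_, ?_⟩
  · intro k _
    exact ⟨selEDF hV0 A k (cntEDF hV0 A (k-1)), rfl⟩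
  · intro k _
    refine le_trans (hkey k) ?_
    have h1 : (1 : ℝ) ≤ 1 + 2 * V := by
      have : (0 : ℝ) ≤ (V : ℝ) := Nat.cast_nonneg _
      linarith
    exact le_mul_of_one_le_right (Real.sqrt_nonneg _) h1
  · intro k _ _
    exact hkey k
end

section
/- Let V ≥ 1, let (u_k)_{k≥1} be a sequence of points from U, and let (e_k)_{k≥1} be ANY sequence of points from E. Then for every k ≥ 1: ‖Σ_{i=1}^k (u_i − e_i)‖₂ ≤ γ_k · C, where s_k := Σ_{i=1}^k (u_i − e_i), γ_k := −min_{j∈{1,…,V}} s_k(j), and C := √V · (V − 1). -/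
open Finset

/-- Theorem 5: for ANY sequence of discrete actions `e_k ∈ E`,
`‖∑_{i=1}^k (u_i - e_i)‖₂ ≤ γ_k C` with `γ_k = -min_j s_k(j)` and `C = √V (V-1)`. -/
theorem general_discrete_sequence_bound (V : ℕ) (hV : 1 ≤ V)
    (u e : ℕ → Fin V → ℝ)
    (hu : ∀ k, 1 ≤ k → u k ∈ stdSimplex ℝ (Fin V))
    (heE : ∀ k, 1 ≤ k → e k ∈ stdBasisSet V)
    (k : ℕ) (hk : 1 ≤ k) :
    euclNorm (∑ i ∈ Icc 1 k, (u i - e i)) ≤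
      (-(Finset.univ.inf' ⟨⟨0, hV⟩, Finset.mem_univ _⟩
          fun j => (∑ i ∈ Icc 1 k, (u i - e i)) j)) *
        (Real.sqrt V * ((V : ℝ) - 1)) := by
  set s : Fin V → ℝ := ∑ i ∈ Icc 1 k, (u i - e i) with hs
  set m : ℝ := Finset.univ.inf' ⟨⟨0, hV⟩, Finset.mem_univ _⟩ (fun j => s j) with hm
  -- component formula
  have hcomp : ∀ j, s j = ∑ i ∈ Icc 1 k, (u i j - e i j) := by
    intro j
    rw [hs, Finset.sum_apply]
    rfl
  -- total sum is zero
  have hsum : ∑ j, s j = 0 := by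
    have : ∑ j, s j = ∑ i ∈ Icc 1 k, (∑ j, (u i j - e i j)) := by
      simp only [hcomp]
      rw [Finset.sum_comm]
    rw [this]
    apply Finset.sum_eq_zero
    intro i hi
    have hi1 : 1 ≤ i := (Finset.mem_Icc.mp hi).1
    have hu1 : ∑ j, u i j = 1 := (hu i hi1).2
    obtain ⟨j0, hj0⟩ := heE i hi1
    have he1 : ∑ j, e i j = 1 := by
      rw [← hj0]
      simp
    rw [Finset.sum_sub_distrib, hu1, he1]
    ring
  -- m ≤ 0
  have hmle : ∀ j, m ≤ s j := fun j => Finset.inf'_le _ (Finset.mem_univ j)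
  have hm0 : m ≤ 0 := by
    by_contra h
    push_neg at h
    have : (0 : ℝ) < ∑ j, s j := by
      apply Finset.sum_pos
      · intro j _
        exact lt_of_lt_of_le h (hmle j)
      · exact ⟨⟨0, hV⟩, Finset.mem_univ _⟩
    linarith [hsum]
  -- upper bound on each component
  have hub : ∀ j, s j ≤ ((V : ℝ) - 1) * (-m) := by
    intro j
    have hsplit : s j + ∑ j' ∈ Finset.univ.erase j, s j' = 0 := by
      rw [Finset.add_sum_erase _ _ (Finset.mem_univ j)] at *
      exact hsum
    have hge : ∑ j' ∈ Finset.univ.erase j, s j' ≥ ((V : ℝ) - 1) * m := by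
      have := Finset.card_nsmul_le_sum (Finset.univ.erase j) s m
        (fun j' _ => hmle j')
      have hcard : (Finset.univ.erase j).card = V - 1 := by
        rw [Finset.card_erase_of_mem (Finset.mem_univ j)]
        simp
      rw [hcard, nsmul_eq_mul] at this
      have : ((V : ℝ) - 1) * m ≤ ∑ j' ∈ Finset.univ.erase j, s j' := by
        have hcast : ((V - 1 : ℕ) : ℝ) = (V : ℝ) - 1 := by
          have : (1 : ℕ) ≤ V := hV
          push_cast [Nat.cast_sub this]
          ring
        rwa [hcast] at this
      linarith
    nlinarith
  -- abs bound
  have habs : ∀ j, |s j| ≤ ((V : ℝ) - 1) * (-m) := by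
    intro j
    rcases eq_or_lt_of_le hV with hV1 | hV2
    · -- V = 1 : s j = 0
      have hj : s j = 0 := by
        have : Finset.univ = {j} := by
          apply Finset.eq_singleton_iff_unique_mem.mpr
          exact ⟨Finset.mem_univ j, fun x _ => by omega⟩
        rw [this, Finset.sum_singleton] at hsum
        exact hsum
      rw [hj, abs_zero]
      have hV1' : ((V : ℝ) - 1) = 0 := by rw [← hV1]; norm_num
      simp [hV1']

    · rw [abs_le]
      constructor
      · have h2 : (2 : ℝ) ≤ (V : ℝ) := by exact_mod_cast hV2
        nlinarith [hmle j]
      · exact hub j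
  -- finish
  have hC0 : 0 ≤ ((V : ℝ) - 1) * (-m) := le_trans (abs_nonneg _) (habs ⟨0, hV⟩)
  have hsq : ∑ j, s j ^ 2 ≤ (V : ℝ) * (((V : ℝ) - 1) * (-m)) ^ 2 := by
    have : ∑ j, s j ^ 2 ≤ ∑ _j : Fin V, (((V : ℝ) - 1) * (-m)) ^ 2 := by
      apply Finset.sum_le_sum
      intro j _
      have := habs j
      nlinarith [abs_nonneg (s j), sq_abs (s j)]
    simpa [Finset.sum_const, Finset.card_univ, nsmul_eq_mul] using this
  have key : euclNorm s ≤ Real.sqrt ((V : ℝ) * (((V : ℝ) - 1) * (-m)) ^ 2) := by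
    exact Real.sqrt_le_sqrt hsq
  calc euclNorm s ≤ Real.sqrt ((V : ℝ) * (((V : ℝ) - 1) * (-m)) ^ 2) := key
    _ = Real.sqrt V * (((V : ℝ) - 1) * (-m)) := by
        rw [Real.sqrt_mul (by positivity), Real.sqrt_sq hC0]
    _ = (-m) * (Real.sqrt V * ((V : ℝ) - 1)) := by ring
end

section
/- Let δ, δ_k ∈ ℝ^m, let θ, λ_k ∈ ℝ^m with θ ⪰ 0 and λ_k ⪰ 0, let α > 0, let x_k ∈ X, and set λ_{k+1} := [λ_k + α(g(x_k) + δ_k)]⁺. Then ‖λ_{k+1} − θ‖₂² ≤ ‖λ_k − θ‖₂² + α²‖g(x_k) + δ‖₂² + α²‖δ_k − δ‖₂² + 2α²(δ_k − δ)ᵀ(g(x_k) + δ) + 2α(λ_k − θ)ᵀ(δ_k − δ) + 2α( L(x_k, λ_k, δ) − h(θ, δ) ). -/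
open Finset

/-- Componentwise projection onto the nonnegative orthant, `[v]⁺`. -/
noncomputable def posPart {m : ℕ} (v : EuclideanSpace ℝ (Fin m)) : EuclideanSpace ℝ (Fin m) :=
  WithLp.toLp 2 (fun j => max (v j) 0)

/-- The Lagrangian `L(x, λ, δ) = f(x) + λᵀ (g(x) + δ)`. -/
noncomputable def lagr {n m : ℕ} (f : EuclideanSpace ℝ (Fin n) → ℝ)
    (g : EuclideanSpace ℝ (Fin n) → EuclideanSpace ℝ (Fin m))
    (x : EuclideanSpace ℝ (Fin n)) (lam δ : EuclideanSpace ℝ (Fin m)) : ℝ :=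
  f x + ∑ j, lam j * (g x j + δ j)

/-- The Lagrange dual function `h(λ, δ) = min_{x ∈ X} L(x, λ, δ)`. -/
noncomputable def dualFn {n m : ℕ} (X : Set (EuclideanSpace ℝ (Fin n)))
    (f : EuclideanSpace ℝ (Fin n) → ℝ)
    (g : EuclideanSpace ℝ (Fin n) → EuclideanSpace ℝ (Fin m))
    (lam δ : EuclideanSpace ℝ (Fin m)) : ℝ :=
  sInf ((fun x => lagr f g x lam δ) '' X)

/-- The basic one-step expansion of the perturbed dual subgradient update. -/
theorem one_step_expansion {n m : ℕ}
    (X : Set (EuclideanSpace ℝ (Fin n))) (hXne : X.Nonempty) (hXcomp : IsCompact X)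
    (hXconv : Convex ℝ X)
    (f : EuclideanSpace ℝ (Fin n) → ℝ) (hf : ConvexOn ℝ Set.univ f) (hfc : Continuous f)
    (g : EuclideanSpace ℝ (Fin n) → EuclideanSpace ℝ (Fin m))
    (hg : ∀ j, ConvexOn ℝ Set.univ fun x => g x j) (hgc : Continuous g)
    (δ δk θ lamk : EuclideanSpace ℝ (Fin m))
    (hθ : ∀ j, 0 ≤ θ j) (hlamk : ∀ j, 0 ≤ lamk j)
    (α : ℝ) (hα : 0 < α)
    (xk : EuclideanSpace ℝ (Fin n)) (hxk : xk ∈ X) :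
    ‖posPart (lamk + α • (g xk + δk)) - θ‖ ^ 2 ≤
      ‖lamk - θ‖ ^ 2 + α ^ 2 * ‖g xk + δ‖ ^ 2 + α ^ 2 * ‖δk - δ‖ ^ 2
        + 2 * α ^ 2 * ∑ j, (δk j - δ j) * (g xk j + δ j)
        + 2 * α * ∑ j, (lamk j - θ j) * (δk j - δ j)
        + 2 * α * (lagr f g xk lamk δ - dualFn X f g θ δ) := by
  set v : EuclideanSpace ℝ (Fin m) := lamk + α • (g xk + δk) with hv
  have hsq : ∀ (u : EuclideanSpace ℝ (Fin m)), ‖u‖ ^ 2 = ∑ j, u j ^ 2 := by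
    intro u
    rw [EuclideanSpace.norm_eq, Real.sq_sqrt (by positivity)]
    simp [sq_abs]
  have hvj : ∀ j, v j = lamk j + α * (g xk j + δk j) := by
    intro j; simp [hv, PiLp.add_apply, PiLp.smul_apply, smul_eq_mul, mul_add]
  have h1 : ‖posPart v - θ‖ ^ 2 ≤ ∑ j, (v j - θ j) ^ 2 := by
    rw [hsq]
    apply Finset.sum_le_sum
    intro j _
    have hpp : (posPart v - θ) j = max (v j) 0 - θ j := by rw [PiLp.sub_apply]; rfl
    rw [hpp]
    rcases le_or_gt 0 (v j) with h | h
    · rw [max_eq_left h]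
    · rw [max_eq_right h.le]
      nlinarith [hθ j]
  have key : ∑ j, (v j - θ j) ^ 2 =
      (∑ j, (lamk j - θ j) ^ 2) + α ^ 2 * (∑ j, (g xk j + δ j) ^ 2)
        + α ^ 2 * (∑ j, (δk j - δ j) ^ 2)
        + 2 * α ^ 2 * (∑ j, (δk j - δ j) * (g xk j + δ j))
        + 2 * α * (∑ j, (lamk j - θ j) * (δk j - δ j))
        + 2 * α * (∑ j, (lamk j - θ j) * (g xk j + δ j)) := by
    simp only [Finset.mul_sum, ← Finset.sum_add_distrib]
    apply Finset.sum_congr rfl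
    intro j _
    rw [hvj j]; ring
  have hbdd : BddBelow ((fun x => lagr f g x θ δ) '' X) := by
    have hc : Continuous fun x => lagr f g x θ δ := by
      unfold lagr
      apply hfc.add
      apply continuous_finset_sum
      intro j _
      exact continuous_const.mul
        (((EuclideanSpace.proj j).continuous.comp hgc).add continuous_const)
    exact (hXcomp.image hc).bddBelow
  have h2 : dualFn X f g θ δ ≤ lagr f g xk θ δ := csInf_le hbdd ⟨xk, hxk, rfl⟩
  have hdiff : ∑ j, (lamk j - θ j) * (g xk j + δ j)
      = lagr f g xk lamk δ - lagr f g xk θ δ := by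
    simp only [lagr, sub_mul]
    rw [Finset.sum_sub_distrib]
    ring
  have h3 : ∑ j, (lamk j - θ j) * (g xk j + δ j)
      ≤ lagr f g xk lamk δ - dualFn X f g θ δ := by
    rw [hdiff]; linarith
  have hn1 : ‖lamk - θ‖ ^ 2 = ∑ j, (lamk j - θ j) ^ 2 := by
    rw [hsq]; exact Finset.sum_congr rfl fun j _ => by simp [PiLp.sub_apply]
  have hn2 : ‖g xk + δ‖ ^ 2 = ∑ j, (g xk j + δ j) ^ 2 := by
    rw [hsq]; exact Finset.sum_congr rfl fun j _ => by simp [PiLp.add_apply]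
  have hn3 : ‖δk - δ‖ ^ 2 = ∑ j, (δk j - δ j) ^ 2 := by
    rw [hsq]; exact Finset.sum_congr rfl fun j _ => by simp [PiLp.sub_apply]
  rw [hn1, hn2, hn3]
  calc ‖posPart v - θ‖ ^ 2 ≤ ∑ j, (v j - θ j) ^ 2 := h1
    _ = _ := key
    _ ≤ _ := by nlinarith [h3]
end

section
/- Let α > 0, let λ₁ ∈ ℝ^m with λ₁ ⪰ 0, let (δ_k)_{k≥1} be a sequence in ℝ^m, let (x_k)_{k≥1} be any sequence of points from X, and define λ_{k+1} := [λ_k + α(g(x_k) + δ_k)]⁺ for k = 1, 2, …. Then for every k ≥ 1, the running average x̄_k := (1/k) Σ_{i=1}^k x_i satisfies the componentwise inequality g(x̄_k) + (1/k) Σ_{i=1}^k δ_i ⪯ λ_{k+1}/(αk). -/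
open Finset

/-- The running average of the primal iterates approximately satisfies the constraints:
`g(x̄_k) + (1/k) ∑_{i=1}^k δ_i ⪯ λ_{k+1} / (αk)` componentwise. -/
theorem averaged_constraint_bound {n m : ℕ}
    (X : Set (EuclideanSpace ℝ (Fin n))) (hXne : X.Nonempty) (hXcomp : IsCompact X)
    (hXconv : Convex ℝ X)
    (g : EuclideanSpace ℝ (Fin n) → EuclideanSpace ℝ (Fin m))
    (hg : ∀ j, ConvexOn ℝ Set.univ fun x => g x j) (hgc : Continuous g)
    (α : ℝ) (hα : 0 < α)
    (δseq : ℕ → EuclideanSpace ℝ (Fin m))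
    (lam : ℕ → EuclideanSpace ℝ (Fin m)) (x : ℕ → EuclideanSpace ℝ (Fin n))
    (hlam1 : ∀ j, 0 ≤ lam 1 j)
    (hxX : ∀ k, 1 ≤ k → x k ∈ X)
    (hrec : ∀ k, 1 ≤ k → lam (k + 1) = posPart (lam k + α • (g (x k) + δseq k)))
    (k : ℕ) (hk : 1 ≤ k) :
    ∀ j, g ((1 / (k : ℝ)) • ∑ i ∈ Icc 1 k, x i) j
        + (1 / (k : ℝ)) * ∑ i ∈ Icc 1 k, δseq i j ≤
      lam (k + 1) j / (α * k) := by
  intro j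
  have hkpos : (0 : ℝ) < (k : ℝ) := by exact_mod_cast hk
  -- step inequality: lam (i+1) j ≥ lam i j + α * (g (x i) j + δseq i j)
  have hstep : ∀ i, 1 ≤ i →
      lam i j + α * (g (x i) j + δseq i j) ≤ lam (i + 1) j := by
    intro i hi
    rw [hrec i hi]
    exact le_max_left _ _
  -- telescoping: lam 1 j + α * ∑ ≤ lam (k+1) j
  have hsum : ∀ K, 1 ≤ K →
      lam 1 j + α * ∑ i ∈ Icc 1 K, (g (x i) j + δseq i j) ≤ lam (K + 1) j := by
    intro K hK
    induction K, hK using Nat.le_induction with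
    | base => simpa using hstep 1 le_rfl
    | succ K hK ih =>
      rw [Finset.sum_Icc_succ_top (by omega : 1 ≤ K + 1)]
      have := hstep (K + 1) (by omega)
      nlinarith [ih]
  have hsum' := hsum k hk
  have hl1 := hlam1 j
  have hS : ∑ i ∈ Icc 1 k, (g (x i) j + δseq i j) ≤ lam (k + 1) j / α := by
    rw [le_div_iff₀ hα]; nlinarith
  -- Jensen
  have hJ : g ((1 / (k : ℝ)) • ∑ i ∈ Icc 1 k, x i) j
      ≤ (1 / (k : ℝ)) * ∑ i ∈ Icc 1 k, g (x i) j := by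
    have hcm : (Icc 1 k).centerMass (fun _ => (1 : ℝ)) x
        = (1 / (k : ℝ)) • ∑ i ∈ Icc 1 k, x i := by
      simp [Finset.centerMass, Nat.card_Icc, one_div]
    have := (hg j).map_centerMass_le (t := Icc 1 k) (w := fun _ => (1 : ℝ))
      (p := x) (fun i _ => zero_le_one) (by simp [Nat.card_Icc]; positivity)
      (fun i _ => Set.mem_univ _)
    rw [hcm] at this
    simpa [Finset.centerMass, Nat.card_Icc, one_div] using this
  have hsplit : ∑ i ∈ Icc 1 k, (g (x i) j + δseq i j)
      = (∑ i ∈ Icc 1 k, g (x i) j) + ∑ i ∈ Icc 1 k, δseq i j :=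
    Finset.sum_add_distrib
  rw [hsplit] at hS
  calc g ((1 / (k : ℝ)) • ∑ i ∈ Icc 1 k, x i) j + (1 / (k : ℝ)) * ∑ i ∈ Icc 1 k, δseq i j
      ≤ (1 / (k : ℝ)) * ((∑ i ∈ Icc 1 k, g (x i) j) + ∑ i ∈ Icc 1 k, δseq i j) := by
        rw [mul_add]; linarith
    _ ≤ (1 / (k : ℝ)) * (lam (k + 1) j / α) := by
        apply mul_le_mul_of_nonneg_left hS (by positivity)
    _ = lam (k + 1) j / (α * k) := by rw [one_div, inv_mul_eq_div, div_div]
end
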